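/- Let f ∈ L²(ℝ^d) ∩ L^∞(ℝ^d), c > 0, and let s(n) ≥ 0 satisfy s(0)=1 and the recursion s(n) = c ∑_{k=0}^{n-1} 2^{2k+1} (n!(n-1)!/((n-k-1)!)²) ‖f^{k+1}‖₂² s(n-k-1). If ‖f‖_∞ < 1/2, then the series ∑_{n≥0} s(n)/(n!)² converges. -/

import Mathlib

open MeasureTheory
open scoped ENNReal

/-- Sufficiency half of the existence criterion for quadratic exponential vectors:
if `‖f‖_∞ < 1/2`, the series `∑ s n / (n!)²` converges, where `s n` satisfies the
squared-norm recursion of `‖B_f^{+n}Φ‖²`. -/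
theorem stmt8 {d : ℕ} (f : (Fin d → ℝ) → ℂ) (c : ℝ) (hc : 0 < c)
    (hf2 : MemLp f 2 volume)
    (hfI : eLpNorm f ⊤ volume < 1 / 2)
    (s : ℕ → ℝ) (hpos : ∀ n, 0 ≤ s n) (hs0 : s 0 = 1)
    (hrec : ∀ n : ℕ, 1 ≤ n → s n = c * ∑ k ∈ Finset.range n,
      (2 : ℝ) ^ (2 * k + 1) *
        ((Nat.factorial n * Nat.factorial (n - 1) : ℝ) / (Nat.factorial (n - k - 1) : ℝ) ^ 2) *
        (∫ x, ‖f x‖ ^ (2 * (k + 1))) * s (n - k - 1)) :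
    Summable (fun n => s n / (Nat.factorial n : ℝ) ^ 2) := by
  set M : ℝ := (eLpNorm f ⊤ volume).toReal with hMdef
  have hfin : eLpNorm f ⊤ volume ≠ ⊤ := (hfI.trans_le le_top).ne
  have hM0 : 0 ≤ M := ENNReal.toReal_nonneg
  have hMlt : M < 1 / 2 := by
    have h := (ENNReal.toReal_lt_toReal hfin (by norm_num : (1/2 : ℝ≥0∞) ≠ ⊤)).2 hfI
    exact h.trans_eq (by simp)
  -- a.e. bound
  have hae : ∀ᵐ x ∂(volume : Measure (Fin d → ℝ)), ‖f x‖ ≤ M := by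
    filter_upwards [enorm_ae_le_eLpNormEssSup f volume] with x hx
    have hx' : (‖f x‖₊ : ℝ≥0∞) ≤ eLpNorm f ⊤ volume := by
      rwa [eLpNorm_exponent_top]
    calc ‖f x‖ = ((‖f x‖₊ : ℝ≥0∞)).toReal := by simp
      _ ≤ M := ENNReal.toReal_mono hfin hx'
  have hInt2 : Integrable (fun x => ‖f x‖ ^ 2)
      (volume : Measure (Fin d → ℝ)) := by
    have h := hf2.integrable_norm_rpow two_ne_zero ENNReal.ofNat_ne_top
    simp only [ENNReal.toReal_ofNat] at h
    convert h using 2 with x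
    rw [show ((2:ℝ)) = ((2:ℕ):ℝ) by norm_num, Real.rpow_natCast]
  have hIntPow : ∀ m : ℕ, Integrable (fun x => ‖f x‖ ^ (2 * (m + 1)))
      (volume : Measure (Fin d → ℝ)) := by
    intro m
    refine (hInt2.const_mul (M ^ (2 * m))).mono'
      (hf2.aestronglyMeasurable.norm.pow _) ?_
    filter_upwards [hae] with x hx
    have h1 : ‖f x‖ ^ (2 * (m + 1)) = ‖f x‖ ^ (2 * m) * ‖f x‖ ^ 2 := by ring
    rw [Real.norm_of_nonneg (pow_nonneg (norm_nonneg _) _), h1]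
    exact mul_le_mul_of_nonneg_right (pow_le_pow_left₀ (norm_nonneg _) hx _)
      (pow_nonneg (norm_nonneg _) _)
  have hIstep : ∀ m : ℕ, (∫ x, ‖f x‖ ^ (2 * (m + 2)))
      ≤ M ^ 2 * ∫ x, ‖f x‖ ^ (2 * (m + 1)) := by
    intro m
    have h1 : (∫ x, ‖f x‖ ^ (2 * (m + 2)))
        ≤ ∫ x, M ^ 2 * ‖f x‖ ^ (2 * (m + 1)) := by
      refine integral_mono_ae (hIntPow (m + 1)) ((hIntPow m).const_mul _) ?_
      filter_upwards [hae] with x hx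
      have h2 : ‖f x‖ ^ (2 * (m + 2)) = ‖f x‖ ^ 2 * ‖f x‖ ^ (2 * (m + 1)) := by ring
      rw [h2]
      exact mul_le_mul_of_nonneg_right (pow_le_pow_left₀ (norm_nonneg _) hx 2)
        (pow_nonneg (norm_nonneg _) _)
    exact h1.trans_eq (integral_const_mul _ _)
  have hL0 : 0 ≤ ∫ x, ‖f x‖ ^ 2 :=
    integral_nonneg fun x => pow_nonneg (norm_nonneg _) _
  -- main recursion bound
  have hmain : ∀ n : ℕ, s (n + 1) ≤
      (2 * c * ((n : ℝ) + 1) * (∫ x, ‖f x‖ ^ 2)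
        + 4 * ((n : ℝ) + 1) ^ 2 * M ^ 2) * s n := by
    intro n
    match n with
    | 0 =>
      have h1 := hrec 1 le_rfl
      norm_num [Finset.sum_range_one, Nat.factorial] at h1
      rw [h1, hs0]
      norm_num
      nlinarith [mul_nonneg hc.le hL0, sq_nonneg M]
    | Nat.succ m =>
      have h1 := hrec (m + 2) (by omega)
      have h2 := hrec (m + 1) (by omega)
      rw [Finset.sum_range_succ'] at h1
      have hA : ∀ i : ℕ, m + 2 - (i + 1) - 1 = m - i := fun i => by omega
      have hB : m + 2 - 0 - 1 = m + 1 := by omega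
      have hC : m + 2 - 1 = m + 1 := by omega
      have hD : ∀ i : ℕ, m + 1 - i - 1 = m - i := fun i => by omega
      have hE : m + 1 - 1 = m := by omega
      have hF : ∀ i : ℕ, i + 1 + 1 = i + 2 := fun i => by omega
      simp only [hA, hB, hC, hF] at h1
      simp only [hD, hE] at h2
      have hfa : ((m + 2).factorial : ℝ) = ((m : ℝ) + 2) * (((m : ℝ) + 1) * (m.factorial : ℝ)) := by
        rw [show m + 2 = (m + 1) + 1 by omega, Nat.factorial_succ, Nat.factorial_succ]
        push_cast; ring
      have hfb : ((m + 1).factorial : ℝ) = ((m : ℝ) + 1) * (m.factorial : ℝ) := by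
        rw [Nat.factorial_succ]; push_cast; ring
      have hT0 : (2 : ℝ) ^ (2 * 0 + 1) *
          ((Nat.factorial (m + 2) * Nat.factorial (m + 1) : ℝ)
            / (Nat.factorial (m + 1) : ℝ) ^ 2) *
          (∫ x, ‖f x‖ ^ (2 * (0 + 1))) * s (m + 1)
          = 2 * ((m : ℝ) + 2) * (∫ x, ‖f x‖ ^ 2) * s (m + 1) := by
        have hnf : ((m + 1).factorial : ℝ) ≠ 0 :=
          Nat.cast_ne_zero.2 (Nat.factorial_ne_zero _)
        have hI : (∫ x, ‖f x‖ ^ (2 * (0 + 1))) = ∫ x, ‖f x‖ ^ 2 := by norm_num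
        have hn1 : ((m : ℝ) + 1) ≠ 0 := by positivity
        have hn2 : ((m.factorial : ℕ) : ℝ) ≠ 0 :=
          Nat.cast_ne_zero.2 (Nat.factorial_ne_zero _)
        rw [hI, hfa, hfb]
        field_simp
        ring
      rw [hT0] at h1
      -- bound the shifted sum
      have hsum : c * (∑ i ∈ Finset.range (m + 1),
          (2 : ℝ) ^ (2 * (i + 1) + 1) *
            ((Nat.factorial (m + 2) * Nat.factorial (m + 1) : ℝ)
              / (Nat.factorial (m - i) : ℝ) ^ 2) *
            (∫ x, ‖f x‖ ^ (2 * (i + 2))) * s (m - i))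
          ≤ 4 * ((m : ℝ) + 2) * ((m : ℝ) + 1) * M ^ 2 * s (m + 1) := by
        rw [h2, Finset.mul_sum, Finset.mul_sum, Finset.mul_sum]
        refine Finset.sum_le_sum fun i _ => ?_
        have hkey := hIstep i
        have hQ : (0 : ℝ) ≤ 4 * c * (2 : ℝ) ^ (2 * i + 1) *
            ((((m : ℝ) + 2) * (((m : ℝ) + 1) * (m.factorial : ℝ)) *
              (((m : ℝ) + 1) * (m.factorial : ℝ))) / ((m - i).factorial : ℝ) ^ 2) *
            s (m - i) := by
          have := hpos (m - i)
          positivity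
        calc c * ((2 : ℝ) ^ (2 * (i + 1) + 1) *
              ((Nat.factorial (m + 2) * Nat.factorial (m + 1) : ℝ)
                / (Nat.factorial (m - i) : ℝ) ^ 2) *
              (∫ x, ‖f x‖ ^ (2 * (i + 2))) * s (m - i))
            = (4 * c * (2 : ℝ) ^ (2 * i + 1) *
              ((((m : ℝ) + 2) * (((m : ℝ) + 1) * (m.factorial : ℝ)) *
                (((m : ℝ) + 1) * (m.factorial : ℝ))) / ((m - i).factorial : ℝ) ^ 2) *
              s (m - i)) * (∫ x, ‖f x‖ ^ (2 * (i + 2))) := by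
              push_cast [hfa, hfb]; ring
          _ ≤ (4 * c * (2 : ℝ) ^ (2 * i + 1) *
              ((((m : ℝ) + 2) * (((m : ℝ) + 1) * (m.factorial : ℝ)) *
                (((m : ℝ) + 1) * (m.factorial : ℝ))) / ((m - i).factorial : ℝ) ^ 2) *
              s (m - i)) * (M ^ 2 * ∫ x, ‖f x‖ ^ (2 * (i + 1))) :=
              mul_le_mul_of_nonneg_left hkey hQ
          _ = 4 * ((m : ℝ) + 2) * ((m : ℝ) + 1) * M ^ 2 *
              (c * ((2 : ℝ) ^ (2 * i + 1) *
                ((Nat.factorial (m + 1) * Nat.factorial m : ℝ)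
                  / (Nat.factorial (m - i) : ℝ) ^ 2) *
                (∫ x, ‖f x‖ ^ (2 * (i + 1))) * s (m - i))) := by
              push_cast [hfb]; ring
      -- assemble
      push_cast
      have hs1 := hpos (m + 1)
      have hm0 : (0 : ℝ) ≤ (m : ℝ) := Nat.cast_nonneg m
      have hMsq : (0 : ℝ) ≤ M ^ 2 := sq_nonneg M
      nlinarith [h1, hsum, mul_nonneg hMsq hs1]
  -- ratio bound on t n = s n / (n!)^2
  have hstep : ∀ n : ℕ, s (n + 1) / ((n + 1).factorial : ℝ) ^ 2 ≤
      (2 * c * (∫ x, ‖f x‖ ^ 2) / ((n : ℝ) + 1) + 4 * M ^ 2) *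
        (s n / (n.factorial : ℝ) ^ 2) := by
    intro n
    have h := hmain n
    have hfn : ((n + 1).factorial : ℝ) = ((n : ℝ) + 1) * (n.factorial : ℝ) := by
      rw [Nat.factorial_succ]; push_cast; ring
    have hnf : (0 : ℝ) < (n.factorial : ℝ) := by
      exact_mod_cast Nat.factorial_pos n
    rw [hfn, div_le_iff₀ (by positivity)]
    calc s (n + 1) ≤ (2 * c * ((n : ℝ) + 1) * (∫ x, ‖f x‖ ^ 2)
          + 4 * ((n : ℝ) + 1) ^ 2 * M ^ 2) * s n := h
      _ = (2 * c * (∫ x, ‖f x‖ ^ 2) / ((n : ℝ) + 1) + 4 * M ^ 2) *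
          (s n / (n.factorial : ℝ) ^ 2) * (((n : ℝ) + 1) * (n.factorial : ℝ)) ^ 2 := by
          field_simp
  -- conclude by the ratio test
  apply summable_of_ratio_norm_eventually_le (r := (1 + 4 * M ^ 2) / 2)
  · nlinarith [hM0]
  · have htend : Filter.Tendsto (fun n : ℕ => 2 * c * (∫ x, ‖f x‖ ^ 2) / ((n : ℝ) + 1))
        Filter.atTop (nhds 0) := by
      have h := (tendsto_const_div_atTop_nhds_zero_nat
        (2 * c * (∫ x, ‖f x‖ ^ 2))).comp (Filter.tendsto_add_atTop_nat 1)
      convert h using 1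
      funext n
      simp only [Function.comp_apply]
      push_cast
      ring
    have hev := htend.eventually_lt_const
      (show (0 : ℝ) < (1 - 4 * M ^ 2) / 2 by nlinarith)
    filter_upwards [hev] with n hn
    have h := hstep n
    have htn : 0 ≤ s n / (n.factorial : ℝ) ^ 2 := by
      have := hpos n
      positivity
    have htn1 : 0 ≤ s (n + 1) / ((n + 1).factorial : ℝ) ^ 2 := by
      have := hpos (n + 1)
      positivity
    rw [Real.norm_of_nonneg htn1, Real.norm_of_nonneg htn]
    calc s (n + 1) / ((n + 1).factorial : ℝ) ^ 2
        ≤ (2 * c * (∫ x, ‖f x‖ ^ 2) / ((n : ℝ) + 1) + 4 * M ^ 2) *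
          (s n / (n.factorial : ℝ) ^ 2) := h
      _ ≤ (1 + 4 * M ^ 2) / 2 * (s n / (n.factorial : ℝ) ^ 2) :=
          mul_le_mul_of_nonneg_right (by linarith) htn
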